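/- Let α > 2, r₀ > 0, ḡ > 0, β ∈ [0,1), s > 0 with (1−β)s ≤ r₀, and define L = ⌊r₀/((1−β)s)⌋ (so L ≥ 1). Then 8ḡ·∑_{ℓ=1}^{L} ℓ + 8·∑_{ℓ=L+1}^{∞} ℓ^{1−α}(1−β)^{−α}s^{−α} ≤ (8/((1−β)²s²))·(ḡr₀² + 2^{α−2}/((α−2)r₀^{α−2})). -/

import Mathlib

open Real Finset

private lemma step_bound {α m : ℝ} (hα : 2 < α) (hm : 2 ≤ m) :
    m ^ (1 - α) ≤ ((m - 1) ^ (2 - α) - m ^ (2 - α)) / (α - 2) := by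
  have h1 : (0:ℝ) < m - 1 := by linarith
  have h0 : (0:ℝ) ∉ Set.uIcc (m - 1) m := Set.notMem_uIcc_of_lt h1 (by linarith)
  have key : ∫ t in (m-1)..m, t ^ (1-α) = (m ^ (1-α+1) - (m-1) ^ (1-α+1)) / (1-α+1) :=
    integral_rpow (Or.inr ⟨by linarith, h0⟩)
  have hint : IntervalIntegrable (fun t : ℝ => t ^ (1-α)) MeasureTheory.volume (m-1) m :=
    intervalIntegral.intervalIntegrable_rpow (Or.inr h0)
  have hmono : m ^ (1-α) * (m - (m-1)) ≤ ∫ t in (m-1)..m, t ^ (1-α) := by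
    have := intervalIntegral.integral_mono_on (by linarith : m - 1 ≤ m)
      (intervalIntegrable_const (c := m ^ (1-α))) hint
      (fun t ht => rpow_le_rpow_of_nonpos (by linarith [ht.1]) ht.2 (by linarith))
    simpa [intervalIntegral.integral_const, smul_eq_mul, mul_comm] using this
  have h2 : m ^ (1-α) ≤ (m ^ (2-α) - (m-1) ^ (2-α)) / (2-α) := by
    have : (1-α+1) = 2-α := by ring
    rw [this] at key
    calc m ^ (1-α) = m ^ (1-α) * (m - (m-1)) := by ring
    _ ≤ _ := hmono
    _ = _ := key
  have heq : (m ^ (2-α) - (m-1) ^ (2-α)) / (2-α) = ((m-1) ^ (2-α) - m ^ (2-α)) / (α-2) := by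
    rw [show (2-α) = -(α-2) by ring, div_neg, ← neg_div, neg_sub]
  linarith [heq ▸ h2]

private lemma tail_bound {α : ℝ} (hα : 2 < α) (L : ℕ) (hL : 1 ≤ L) :
    Summable (fun n : ℕ => ((L:ℝ) + 1 + n) ^ (1 - α)) ∧
    (∑' n : ℕ, ((L:ℝ) + 1 + n) ^ (1 - α)) ≤ (L:ℝ) ^ (2 - α) / (α - 2) := by
  set g : ℕ → ℝ := fun n => ((L:ℝ) + n) ^ (2 - α) / (α - 2) with hg
  have hLpos : (0:ℝ) < L := by exact_mod_cast hL
  have hterm : ∀ n : ℕ, ((L:ℝ) + 1 + n) ^ (1 - α) ≤ g n - g (n+1) := by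
    intro n
    have hm : 2 ≤ (L:ℝ) + 1 + n := by
      have : (1:ℝ) ≤ L := by exact_mod_cast hL
      have : (0:ℝ) ≤ n := Nat.cast_nonneg n
      push_cast; linarith [(show (1:ℝ) ≤ L by exact_mod_cast hL)]
    have := step_bound hα hm
    have e1 : (L:ℝ) + 1 + n - 1 = (L:ℝ) + n := by ring
    rw [e1] at this
    calc ((L:ℝ) + 1 + n) ^ (1 - α) ≤ _ := this
    _ = g n - g (n+1) := by
        simp only [hg]
        push_cast
        rw [sub_div]
        ring_nf
  have hb_nonneg : ∀ n, (0:ℝ) ≤ g n - g (n+1) :=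
    fun n => le_trans (rpow_nonneg (by positivity) _) (hterm n)
  have hgtend : Filter.Tendsto g Filter.atTop (nhds 0) := by
    have h1 : Filter.Tendsto (fun n : ℕ => (L:ℝ) + n) Filter.atTop Filter.atTop :=
      Filter.tendsto_atTop_add_const_left _ _ tendsto_natCast_atTop_atTop
    have h2 : Filter.Tendsto (fun x : ℝ => x ^ (-(α-2))) Filter.atTop (nhds 0) :=
      tendsto_rpow_neg_atTop (by linarith)
    have h3 := (h2.comp h1).div_const (α - 2)
    simpa [hg, Function.comp, neg_sub, zero_div] using h3
  have hbsum : HasSum (fun n => g n - g (n+1)) (g 0) := by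
    rw [hasSum_iff_tendsto_nat_of_nonneg hb_nonneg]
    have : ∀ N, ∑ i ∈ range N, (g i - g (i+1)) = g 0 - g N := fun N => Finset.sum_range_sub' g N
    simp_rw [this]
    simpa using (tendsto_const_nhds.sub hgtend)
  have ha : Summable (fun n : ℕ => ((L:ℝ) + 1 + n) ^ (1 - α)) :=
    Summable.of_nonneg_of_le (fun n => rpow_nonneg (by positivity) _) hterm hbsum.summable
  refine ⟨ha, ?_⟩
  calc (∑' n : ℕ, ((L:ℝ) + 1 + n) ^ (1 - α)) ≤ ∑' n, (g n - g (n+1)) :=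
        Summable.tsum_le_tsum hterm ha hbsum.summable
  _ = g 0 := hbsum.tsum_eq
  _ = (L:ℝ) ^ (2 - α) / (α - 2) := by simp [hg]

theorem near_far_field_gain_bound (α r₀ g β s : ℝ)
    (hα : 2 < α) (hr₀ : 0 < r₀) (hg : 0 < g) (hβ0 : 0 ≤ β) (hβ1 : β < 1) (hs : 0 < s)
    (hns : (1 - β) * s ≤ r₀) :
    8 * g * (∑ ℓ ∈ Finset.Icc 1 ⌊r₀ / ((1 - β) * s)⌋₊, (ℓ : ℝ)) +
      8 * (∑' n : ℕ, ((⌊r₀ / ((1 - β) * s)⌋₊ : ℝ) + 1 + n) ^ (1 - α)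
            * (1 - β) ^ (-α) * s ^ (-α)) ≤
    (8 / ((1 - β) ^ 2 * s ^ 2)) * (g * r₀ ^ 2 + (2 : ℝ) ^ (α - 2) / ((α - 2) * r₀ ^ (α - 2))) := by
  have hβ : (0:ℝ) < 1 - β := by linarith
  set c : ℝ := (1 - β) * s with hc
  have hcpos : 0 < c := mul_pos hβ hs
  set x : ℝ := r₀ / c with hx
  have hx1 : 1 ≤ x := (one_le_div hcpos).mpr hns
  have hxpos : 0 < x := lt_of_lt_of_le one_pos hx1
  set L : ℕ := ⌊x⌋₊ with hL
  have hL1 : 1 ≤ L := Nat.le_floor (by exact_mod_cast hx1)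
  have hLx : (L:ℝ) ≤ x := Nat.floor_le hxpos.le
  have hLpos : (0:ℝ) < L := by exact_mod_cast hL1
  -- first sum
  have hsum1 : (∑ ℓ ∈ Finset.Icc 1 L, (ℓ : ℝ)) ≤ (L:ℝ) * L := by
    calc (∑ ℓ ∈ Finset.Icc 1 L, (ℓ : ℝ)) ≤ ∑ ℓ ∈ Finset.Icc 1 L, (L:ℝ) :=
        Finset.sum_le_sum fun i hi => by exact_mod_cast (Finset.mem_Icc.mp hi).2
    _ = (L:ℝ) * L := by
        rw [Finset.sum_const, Nat.card_Icc]
        simp [nsmul_eq_mul]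
  have h1 : 8 * g * (∑ ℓ ∈ Finset.Icc 1 L, (ℓ : ℝ)) ≤ 8 * g * (x * x) := by
    have : (L:ℝ) * L ≤ x * x := mul_le_mul hLx hLx hLpos.le hxpos.le
    nlinarith [hsum1]
  -- second sum
  obtain ⟨hasum, htail⟩ := tail_bound hα L hL1
  have hterm_eq : ∀ n : ℕ, ((L:ℝ) + 1 + n) ^ (1 - α) * (1 - β) ^ (-α) * s ^ (-α)
      = ((L:ℝ) + 1 + n) ^ (1 - α) * c ^ (-α) := by
    intro n
    rw [hc, Real.mul_rpow hβ.le hs.le]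
    ring
  have h2 : (∑' n : ℕ, ((L:ℝ) + 1 + n) ^ (1 - α) * (1 - β) ^ (-α) * s ^ (-α))
      ≤ ((L:ℝ) ^ (2 - α) / (α - 2)) * c ^ (-α) := by
    have := tsum_mul_right (L := SummationFilter.unconditional ℕ) (a := c ^ (-α)) (f := fun n : ℕ => ((L:ℝ) + 1 + n) ^ (1 - α))
    calc (∑' n : ℕ, ((L:ℝ) + 1 + n) ^ (1 - α) * (1 - β) ^ (-α) * s ^ (-α))
        = (∑' n : ℕ, ((L:ℝ) + 1 + n) ^ (1 - α)) * c ^ (-α) := by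
          rw [← this]; exact tsum_congr hterm_eq
    _ ≤ _ := by
        apply mul_le_mul_of_nonneg_right htail (rpow_nonneg hcpos.le _)
  -- L ≥ x/2
  have hL2 : x / 2 ≤ (L:ℝ) := by
    rcases le_or_gt x 2 with h | h
    · calc x / 2 ≤ 1 := by linarith
      _ ≤ (L:ℝ) := by exact_mod_cast hL1
    · have := Nat.lt_floor_add_one x
      have : x - 1 < (L:ℝ) := by linarith [Nat.lt_floor_add_one x]
      linarith
  have hrle : (L:ℝ) ^ (2 - α) ≤ (x/2) ^ (2 - α) :=
    rpow_le_rpow_of_nonpos (by linarith) hL2 (by linarith)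
  -- algebra to finish
  have hα2 : (0:ℝ) < α - 2 := by linarith
  have key2 : ((L:ℝ) ^ (2 - α) / (α - 2)) * c ^ (-α)
      ≤ (1 / (c^2)) * ((2:ℝ) ^ (α - 2) / ((α - 2) * r₀ ^ (α - 2))) := by
    have hcα : (0:ℝ) < c ^ (-α) := rpow_pos_of_pos hcpos _
    have step1 : ((L:ℝ) ^ (2 - α) / (α - 2)) * c ^ (-α)
        ≤ ((x/2) ^ (2 - α) / (α - 2)) * c ^ (-α) := by
      apply mul_le_mul_of_nonneg_right _ hcα.le
      gcongr
    refine step1.trans (le_of_eq ?_)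
    have e1 : (x/2) ^ (2 - α) = x ^ (2-α) * (2:ℝ) ^ (α - 2) := by
      rw [Real.div_rpow hxpos.le (by norm_num : (0:ℝ) ≤ 2), div_eq_mul_inv,
        ← Real.rpow_neg (by norm_num : (0:ℝ) ≤ 2), neg_sub]
    have e2 : x ^ (2-α) = r₀ ^ (2-α) * c ^ (α - 2) := by
      rw [hx, Real.div_rpow hr₀.le hcpos.le, div_eq_mul_inv,
        ← Real.rpow_neg hcpos.le, neg_sub]
    have e3 : c ^ (α-2) * c ^ (-α) = c ^ (-(2:ℝ)) := by
      rw [← Real.rpow_add hcpos]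
      congr 1; ring
    have e4 : c ^ (-(2:ℝ)) = 1 / c^2 := by
      rw [Real.rpow_neg hcpos.le, Real.rpow_two]
      simp [one_div]
    have e5 : r₀ ^ (2-α) = 1 / r₀ ^ (α-2) := by
      rw [show (2-α) = -(α-2) by ring, Real.rpow_neg hr₀.le, one_div]
    rw [e1, e2]
    rw [show r₀ ^ (2-α) * c ^ (α-2) * (2:ℝ)^(α-2) / (α-2) * c^(-α)
        = (c ^ (α-2) * c^(-α)) * (r₀ ^ (2-α) * ((2:ℝ)^(α-2) / (α-2))) by ring]
    rw [e3, e4, e5]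
    have hrp : (0:ℝ) < r₀ ^ (α-2) := rpow_pos_of_pos hr₀ _
    field_simp
  -- combine
  have hc2 : c^2 = (1-β)^2 * s^2 := by rw [hc]; ring
  have hx2 : x * x = r₀^2 / c^2 := by rw [hx]; field_simp
  calc 8 * g * (∑ ℓ ∈ Finset.Icc 1 L, (ℓ : ℝ))
        + 8 * (∑' n : ℕ, ((L:ℝ) + 1 + n) ^ (1 - α) * (1 - β) ^ (-α) * s ^ (-α))
      ≤ 8 * g * (x * x) + 8 * ((1 / (c^2)) * ((2:ℝ) ^ (α - 2) / ((α - 2) * r₀ ^ (α - 2)))) := by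
        have := h2.trans key2
        have h8 : (0:ℝ) < 8 := by norm_num
        nlinarith [h1, this]
  _ = (8 / ((1 - β) ^ 2 * s ^ 2)) * (g * r₀ ^ 2 + (2 : ℝ) ^ (α - 2) / ((α - 2) * r₀ ^ (α - 2))) := by
      rw [hx2, ← hc2]
      have : (0:ℝ) < c^2 := by positivity
      field_simp
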